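/- Let M = 2^t - 1 > 3 be a Mersenne prime and c = 2M + 1. Then the only solutions (x, y, u, v) in nonnegative integers x, y and u, v ∈ {0,1} of (-1)^u 2^x + (-1)^v M^y = c are: 2^{t+1} - 1 = c, 2^t + M = c, and 2^{2t} - M^2 = c. -/

import Mathlib

theorem mersenne_2Mplus1 (t M c : ℕ) (ht : 3 ≤ t) (hM : M = 2 ^ t - 1) (hMp : M.Prime)
    (hc : c = 2 * M + 1) (x y u v : ℕ) (hu : u ≤ 1) (hv : v ≤ 1) :
    (-1 : ℤ) ^ u * 2 ^ x + (-1 : ℤ) ^ v * (M : ℤ) ^ y = c ↔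
      (x, y, u, v) = (t + 1, 0, 0, 1) ∨ (x, y, u, v) = (t, 1, 0, 0) ∨
      (x, y, u, v) = (2 * t, 2, 0, 1) := by
  obtain ⟨r, hr⟩ := Nat.exists_eq_add_of_le ht
  subst hr
  have h2t : M + 1 = 2 ^ (3 + r) := by
    rw [hM, Nat.sub_add_cancel Nat.one_le_two_pow]
  have hM7 : 7 ≤ M := by
    have h8 : (2:ℕ) ^ (3 + r) = 8 * 2 ^ r := by ring
    have h1 : 1 ≤ (2:ℕ) ^ r := Nat.one_le_two_pow
    nlinarith
  -- r is even
  obtain ⟨q, hq⟩ : ∃ q, r = 2 * q := by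
    rcases Nat.even_or_odd r with ⟨k, hk⟩ | ⟨k, hk⟩
    · exact ⟨k, by omega⟩
    · exfalso
      have hd : (3:ℕ) ∣ 2 ^ (2 * (k + 2)) - 1 := by
        have h := Nat.sub_dvd_pow_sub_pow (2 ^ 2) 1 (k + 2)
        rw [← pow_mul] at h
        simpa using h
      have hexp : 3 + r = 2 * (k + 2) := by omega
      have hdM : (3:ℕ) ∣ M := by
        have : M = 2 ^ (2 * (k + 2)) - 1 := by rw [← hexp]; omega
        rw [this]; exact hd
      rcases (Nat.Prime.eq_one_or_self_of_dvd hMp 3 hdM) with h3 | h3 <;> omega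
  subst hq
  have hcz : (c:ℤ) = 2 * (M:ℤ) + 1 := by rw [hc]; push_cast; ring
  have hMz : (M:ℤ) = 2 ^ (3 + 2 * q) - 1 := by
    have : ((M:ℤ)) + 1 = 2 ^ (3 + 2 * q) := by exact_mod_cast h2t
    linarith
  constructor
  · intro h
    interval_cases u <;> interval_cases v <;> norm_num at h
    -- case u = 0, v = 0
    · have hN : 2 ^ x + M ^ y = c := by exact_mod_cast h
      rcases y with _ | _ | y2
      · -- y = 0
        exfalso
        norm_num at hN
        rcases Nat.lt_or_ge x 2 with hx | hx
        · have h2 : (2:ℕ) ^ x ≤ 2 ^ 1 := Nat.pow_le_pow_right (by norm_num) (by omega)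
          norm_num at h2
          linarith
        · obtain ⟨m, hm⟩ : (4:ℕ) ∣ 2 ^ x := by simpa using Nat.pow_dvd_pow 2 hx
          obtain ⟨p, hp⟩ : ∃ p, M + 1 = 4 * p := ⟨2 ^ (1 + 2 * q), by rw [h2t]; ring⟩
          rw [hm] at hN
          omega
      · -- y = 1
        norm_num at hN
        have hx : (2:ℕ) ^ x = 2 ^ (3 + 2 * q) := by linarith
        have hx' : x = 3 + 2 * q := Nat.pow_right_injective (by norm_num) hx
        right; left; simp only [Prod.mk.injEq, and_true, true_and]; omega
      · -- y ≥ 2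
        exfalso
        have hMy : M ^ 2 ≤ M ^ (y2 + 2) := Nat.pow_le_pow_right (by omega) (by omega)
        have hM2 : 7 * M ≤ M ^ 2 := by nlinarith
        have h1x : 1 ≤ (2:ℕ) ^ x := Nat.one_le_two_pow
        linarith
    -- case u = 0, v = 1
    · have hEz : (2:ℤ) ^ x = (c:ℤ) + (M:ℤ) ^ y := by linarith
      have hN : 2 ^ x = c + M ^ y := by exact_mod_cast hEz
      rcases Nat.lt_or_ge y 3 with hy | hy3
      · interval_cases y
        · -- y = 0
          norm_num at hN
          have e : (2:ℕ) ^ (4 + 2 * q) = 2 * 2 ^ (3 + 2 * q) := by ring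
          have hx : (2:ℕ) ^ x = 2 ^ (4 + 2 * q) := by linarith
          have hx' : x = 4 + 2 * q := Nat.pow_right_injective (by norm_num) hx
          left; simp only [Prod.mk.injEq, and_true, true_and]; omega
        · -- y = 1
          exfalso
          norm_num at hN
          rcases Nat.lt_or_ge x 2 with hx | hx
          · have h2 : (2:ℕ) ^ x ≤ 2 ^ 1 := Nat.pow_le_pow_right (by norm_num) (by omega)
            norm_num at h2
            linarith
          · obtain ⟨m, hm⟩ : (4:ℕ) ∣ 2 ^ x := by simpa using Nat.pow_dvd_pow 2 hx
            obtain ⟨p, hp⟩ : ∃ p, M + 1 = 4 * p := ⟨2 ^ (1 + 2 * q), by rw [h2t]; ring⟩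
            rw [hm] at hN
            omega
        · -- y = 2
          have e : c + M ^ 2 = 2 ^ ((3 + 2 * q) * 2) := by
            have e1 : c + M ^ 2 = (M + 1) ^ 2 := by rw [hc]; ring
            rw [e1, h2t, ← pow_mul]
          rw [e] at hN
          have hx' : x = (3 + 2 * q) * 2 := Nat.pow_right_injective (by norm_num) hN
          right; right; simp only [Prod.mk.injEq, and_true, true_and]; omega
      · -- y ≥ 3 : main case, no solutions
        exfalso
        have h1My : 1 ≤ M ^ y := Nat.one_le_pow _ _ (by omega)
        have hx1 : 4 + 2 * q ≤ x := by
          have e : (2:ℕ) ^ (4 + 2 * q) = 2 * 2 ^ (3 + 2 * q) := by ring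
          have hle : (2:ℕ) ^ (4 + 2 * q) ≤ 2 ^ x := by linarith
          exact (Nat.pow_le_pow_iff_right (by norm_num)).mp hle
        -- y is even
        obtain ⟨s, hs⟩ : ∃ s, y = 2 * s := by
          rcases Nat.even_or_odd y with ⟨k, hk⟩ | ⟨s, hs⟩
          · exact ⟨k, by omega⟩
          · exfalso
            have d0 : (2:ℤ) ^ (4 + 2 * q) ∣ 2 ^ x := pow_dvd_pow 2 hx1
            have dM2 : (2:ℤ) ^ (4 + 2 * q) ∣ (M:ℤ) ^ 2 - 1 :=
              ⟨2 ^ (2 + 2 * q) - 1, by rw [hMz]; ring⟩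
            have dpow : (M:ℤ) ^ 2 - 1 ∣ ((M:ℤ) ^ 2) ^ s - 1 := by
              simpa using sub_dvd_pow_sub_pow ((M:ℤ) ^ 2) 1 s
            have hyy : (M:ℤ) ^ y = ((M:ℤ) ^ 2) ^ s * M := by
              rw [hs, pow_succ, pow_mul]
            have key : (2:ℤ) ^ (4 + 2 * q) ∣ 3 * (M:ℤ) + 1 := by
              have e2 : 3 * (M:ℤ) + 1 = 2 ^ x - ((((M:ℤ) ^ 2) ^ s - 1) * M) := by
                rw [hEz, hyy, hcz]; ring
              rw [e2]
              exact dvd_sub d0 ((dM2.trans dpow).mul_right M)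
            have h4d : (4:ℤ) ∣ 3 * (M:ℤ) + 1 :=
              dvd_trans ⟨2 ^ (2 + 2 * q), by ring⟩ key
            have h2d : (4:ℤ) ∣ 2 := by
              have e3 : (2:ℤ) = 24 * (2 ^ q) ^ 2 - (3 * (M:ℤ) + 1) := by rw [hMz]; ring
              rw [e3]; exact dvd_sub ⟨6 * (2 ^ q) ^ 2, by ring⟩ h4d
            norm_num at h2d
        have hs2 : 2 ≤ s := by omega
        -- x is even
        have d41 : (3:ℤ) ∣ (M:ℤ) - 1 := by
          have d1 : (3:ℤ) ∣ 2 ^ (2 * (q + 1)) - 1 := by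
            have h := sub_dvd_pow_sub_pow ((2:ℤ) ^ 2) 1 (q + 1)
            rw [← pow_mul] at h
            simpa using h
          have e : (M:ℤ) - 1 = 2 * (2 ^ (2 * (q + 1)) - 1) := by rw [hMz]; ring
          rw [e]; exact d1.mul_left 2
        have d3y : (3:ℤ) ∣ (M:ℤ) ^ y - 1 :=
          d41.trans (by simpa using sub_dvd_pow_sub_pow (M:ℤ) 1 y)
        have d3x : (3:ℤ) ∣ (2:ℤ) ^ x - 1 := by
          have e2 : (2:ℤ) ^ x - 1 = 2 * ((M:ℤ) - 1) + ((M:ℤ) ^ y - 1) + 3 := by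
            rw [hEz, hcz]; ring
          rw [e2]
          exact dvd_add (dvd_add (d41.mul_left 2) d3y) (dvd_refl 3)
        obtain ⟨w, hw⟩ : ∃ w, x = 2 * w := by
          rcases Nat.even_or_odd x with ⟨k, hk⟩ | ⟨w, hw⟩
          · exact ⟨k, by omega⟩
          · exfalso
            have dA : (3:ℤ) ∣ 2 ^ (2 * w) - 1 := by
              have h := sub_dvd_pow_sub_pow ((2:ℤ) ^ 2) 1 w
              rw [← pow_mul] at h
              simpa using h
            have h1d : (3:ℤ) ∣ 1 := by
              have e3 : (1:ℤ) = ((2:ℤ) ^ x - 1) - 2 * (2 ^ (2 * w) - 1) := by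
                rw [hw]; ring
              rw [e3]; exact dvd_sub d3x (dA.mul_left 2)
            norm_num at h1d
        -- factorization
        have hfac : (c:ℤ) = ((2:ℤ) ^ w + (M:ℤ) ^ s) * ((2:ℤ) ^ w - (M:ℤ) ^ s) := by
          rw [hw, hs] at hEz
          linear_combination -hEz
        have hcpos : (0:ℤ) < c := by
          have : (0:ℕ) < c := by omega
          exact_mod_cast this
        have hble : (2:ℤ) ^ w + (M:ℤ) ^ s ≤ c := Int.le_of_dvd hcpos ⟨_, hfac⟩
        have hMspos : (0:ℤ) < (M:ℤ) ^ s := by positivity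
        have hwlt : (2:ℤ) ^ w < 2 ^ (4 + 2 * q) := by
          have e4 : (2:ℤ) ^ (4 + 2 * q) = 2 * 2 ^ (3 + 2 * q) := by ring
          linarith
        have hwlt' : w < 4 + 2 * q := by
          have hn : (2:ℕ) ^ w < 2 ^ (4 + 2 * q) := by exact_mod_cast hwlt
          exact (Nat.pow_lt_pow_iff_right (by norm_num)).mp hn
        -- size contradiction
        have hMlb : 2 ^ (2 + 2 * q) ≤ M := by
          have e5 : (2:ℕ) ^ (3 + 2 * q) = 2 * 2 ^ (2 + 2 * q) := by ring
          have h1 : 1 ≤ (2:ℕ) ^ (2 + 2 * q) := Nat.one_le_two_pow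
          linarith
        have hy4 : 4 ≤ y := by omega
        have hMy4 : (2:ℕ) ^ (8 + 8 * q) ≤ M ^ y := by
          calc (2:ℕ) ^ (8 + 8 * q) ≤ 2 ^ ((2 + 2 * q) * y) := by
                apply Nat.pow_le_pow_right (by norm_num)
                calc 8 + 8 * q = (2 + 2 * q) * 4 := by ring
                  _ ≤ (2 + 2 * q) * y := Nat.mul_le_mul_left _ hy4
            _ = (2 ^ (2 + 2 * q)) ^ y := pow_mul 2 _ y
            _ ≤ M ^ y := Nat.pow_le_pow_left hMlb y
        have hxub : (2:ℕ) ^ x ≤ 2 ^ (6 + 4 * q) :=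
          Nat.pow_le_pow_right (by norm_num) (by omega)
        have hgt : (2:ℕ) ^ (6 + 4 * q) < 2 ^ (8 + 8 * q) :=
          Nat.pow_lt_pow_right (by norm_num) (by omega)
        linarith
    -- case u = 1, v = 0
    · exfalso
      have hEz : (M:ℤ) ^ y = (c:ℤ) + 2 ^ x := by linarith
      rcases y with _ | y1
      · norm_num at hEz
        have h1x : (0:ℤ) < 2 ^ x := by positivity
        have h7 : (7:ℤ) ≤ M := by exact_mod_cast hM7
        linarith
      · have hMdvd : (M:ℤ) ∣ (M:ℤ) ^ (y1 + 1) := dvd_pow_self _ (by omega)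
        have d2x : (M:ℤ) ∣ 2 ^ x + 1 := by
          have e : (2:ℤ) ^ x + 1 = (M:ℤ) ^ (y1 + 1) - 2 * (M:ℤ) := by
            rw [hEz, hcz]; ring
          rw [e]; exact dvd_sub hMdvd (Dvd.dvd.mul_left dvd_rfl 2)
        have dsum : (2:ℤ) ^ x + 1 ∣ ((2:ℤ) ^ x) ^ (3 + 2 * q) + 1 := by
          have hodd : Odd (3 + 2 * q) := ⟨q + 1, by ring⟩
          have h := sub_dvd_pow_sub_pow ((2:ℤ) ^ x) (-1) (3 + 2 * q)
          rw [hodd.neg_one_pow] at h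
          simpa using h
        have ddiff : (M:ℤ) ∣ (2:ℤ) ^ ((3 + 2 * q) * x) - 1 := by
          have h := sub_dvd_pow_sub_pow ((2:ℤ) ^ (3 + 2 * q)) 1 x
          rw [← pow_mul] at h
          simp only [one_pow] at h
          rw [← hMz] at h
          exact h
        have d2 : (M:ℤ) ∣ 2 := by
          have e : (2:ℤ) = (((2:ℤ) ^ x) ^ (3 + 2 * q) + 1) -
              ((2:ℤ) ^ ((3 + 2 * q) * x) - 1) := by
            rw [← pow_mul, Nat.mul_comm x (3 + 2 * q)]; ring
          rw [e]; exact dvd_sub (d2x.trans dsum) ddiff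
        have hle : (M:ℤ) ≤ 2 := Int.le_of_dvd (by norm_num) d2
        have h7 : (7:ℤ) ≤ M := by exact_mod_cast hM7
        linarith
    -- case u = 1, v = 1
    · exfalso
      have h1x : (0:ℤ) < 2 ^ x := by positivity
      have h1y : (0:ℤ) ≤ (M:ℤ) ^ y := by positivity
      have hcnn : (0:ℤ) ≤ (c:ℤ) := by exact_mod_cast Nat.zero_le c
      linarith
  · rintro (h | h | h) <;> simp only [Prod.mk.injEq] at h <;>
      obtain ⟨hx, hy, hu', hv'⟩ := h <;> subst hx <;> subst hy <;> subst hu' <;> subst hv' <;>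
      norm_num <;> rw [hcz, hMz] <;> ring
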